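/- (Theorem 3, pointwise bound within subintervals) Let 0 < α < β, let M ≥ 1, and set r_k = α + (β−α)(k+1)/(M+1) for k = 0, …, M−1 and h(λ, M) = ∏_{k=0}^{M−1}(1 − λ/r_k). Then for every i ∈ {0, 1, …, M} and every λ ∈ [α + (β−α)i/(M+1), α + (β−α)(i+1)/(M+1)], one has |h(λ, M)| ≤ i!·(M−i)! / ∏_{k=1}^{M}(k + (M+1)α/(β−α)). -/

import Mathlib

open Finset

lemma prod_range_sub_eq_factorial (n : ℕ) :
    ∏ k ∈ Finset.range n, (n - k) = n.factorial := by
  induction n with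
  | zero => simp
  | succ n ih =>
    rw [Finset.prod_range_succ']
    simp only [Nat.succ_sub_succ_eq_sub, Nat.sub_zero]
    rw [ih, Nat.factorial_succ, mul_comm]

theorem stmt_8 (α β : ℝ) (hα : 0 < α) (hαβ : α < β) (M : ℕ) (hM : 1 ≤ M) :
    ∀ i ≤ M, ∀ x ∈ Set.Icc (α + (β - α) * i / (M + 1)) (α + (β - α) * (i + 1) / (M + 1)),
      |∏ k ∈ Finset.range M, (1 - x / (α + (β - α) * (k + 1) / (M + 1)))| ≤
        ((Nat.factorial i : ℝ) * (Nat.factorial (M - i) : ℝ)) /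
          ∏ k ∈ Finset.Icc 1 M, ((k : ℝ) + (M + 1) * α / (β - α)) := by
  intro i hi x hx
  have hβα : (0:ℝ) < β - α := by linarith
  have hM1 : (0:ℝ) < (M:ℝ) + 1 := by positivity
  set δ : ℝ := (β - α) / (M + 1) with hδdef
  have hδ : 0 < δ := by positivity
  set c : ℝ := ((M:ℝ) + 1) * α / (β - α) with hcdef
  have hc : 0 < c := by positivity
  have hδc : δ * c = α := by
    rw [hδdef, hcdef]; field_simp
  obtain ⟨hx1, hx2⟩ := hx
  have hx1' : α + δ * i ≤ x := by
    rw [hδdef]; convert hx1 using 1; rfl; ring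
  have hx2' : x ≤ α + δ * (i + 1) := by
    rw [hδdef]; convert hx2 using 1; rfl; ring
  set num : ℕ → ℝ := fun k => if k < i then ((i - k : ℕ) : ℝ) else ((k + 1 - i : ℕ) : ℝ)
    with hnum
  have hterm : ∀ k ∈ Finset.range M,
      |1 - x / (α + (β - α) * (k + 1) / (M + 1))| ≤ num k / (c + (k + 1)) := by
    intro k hk
    have hr_eq : α + (β - α) * ((k:ℝ) + 1) / ((M:ℝ) + 1) = δ * (c + (k + 1)) := by
      rw [hδdef, hcdef]; field_simp
    have hck : (0:ℝ) < c + (k + 1) := by positivity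
    have hr : (0:ℝ) < α + (β - α) * ((k:ℝ) + 1) / ((M:ℝ) + 1) := by
      rw [hr_eq]; positivity
    have h1 : 1 - x / (α + (β - α) * ((k:ℝ) + 1) / ((M:ℝ) + 1))
        = ((α + (β - α) * ((k:ℝ) + 1) / ((M:ℝ) + 1)) - x)
          / (α + (β - α) * ((k:ℝ) + 1) / ((M:ℝ) + 1)) := by
      field_simp
    rw [h1, abs_div, abs_of_pos hr, hr_eq]
    have habs : |δ * (c + (k + 1)) - x| ≤ δ * num k := by
      rw [hnum]
      by_cases hki : k < i
      · simp only [hki, if_true]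
        have hcast : ((i - k : ℕ) : ℝ) = (i:ℝ) - k := by
          have := Nat.cast_sub (le_of_lt hki) (R := ℝ); exact this
        rw [hcast]
        have hk1i : ((k:ℝ) + 1) ≤ (i:ℝ) := by exact_mod_cast hki
        have key : δ * ((k:ℝ) + 1) ≤ δ * (i:ℝ) := mul_le_mul_of_nonneg_left hk1i (le_of_lt hδ)
        have hle : δ * (c + (k + 1)) - x ≤ 0 := by
          rw [mul_add, hδc]; linarith
        rw [abs_of_nonpos hle, mul_add, hδc]
        linarith
      · simp only [hki, if_false]
        push_neg at hki
        have hcast : ((k + 1 - i : ℕ) : ℝ) = (k:ℝ) + 1 - i := by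
          have := Nat.cast_sub (by omega : i ≤ k + 1) (R := ℝ); push_cast at this ⊢; linarith
        rw [hcast]
        have hik : (i:ℝ) ≤ (k:ℝ) := by exact_mod_cast hki
        have key : δ * ((i:ℝ) + 1) ≤ δ * ((k:ℝ) + 1) :=
          mul_le_mul_of_nonneg_left (by linarith) (le_of_lt hδ)
        have hge : 0 ≤ δ * (c + (k + 1)) - x := by
          rw [mul_add, hδc]; linarith
        rw [abs_of_nonneg hge, mul_add, hδc]
        linarith
    calc |δ * (c + (k + 1)) - x| / (δ * (c + (k + 1)))
        ≤ (δ * num k) / (δ * (c + (k + 1))) := by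
          gcongr
      _ = num k / (c + (k + 1)) := by
          rw [mul_div_mul_left _ _ (ne_of_gt hδ)]
  have hmain : |∏ k ∈ Finset.range M, (1 - x / (α + (β - α) * (k + 1) / (M + 1)))|
      ≤ ∏ k ∈ Finset.range M, (num k / (c + (k + 1))) := by
    rw [Finset.abs_prod]
    exact Finset.prod_le_prod (fun k _ => abs_nonneg _) hterm
  refine hmain.trans (le_of_eq ?_)
  rw [Finset.prod_div_distrib]
  congr 1
  · -- numerator
    rw [← Finset.prod_range_mul_prod_Ico num hi]
    have h1 : ∏ k ∈ Finset.range i, num k = (Nat.factorial i : ℝ) := by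
      rw [hnum]
      have : ∀ k ∈ Finset.range i, (if k < i then ((i - k : ℕ):ℝ) else ((k + 1 - i : ℕ):ℝ))
          = ((i - k : ℕ) : ℝ) := by
        intro k hk; rw [if_pos (Finset.mem_range.mp hk)]
      rw [Finset.prod_congr rfl this, ← Nat.cast_prod, prod_range_sub_eq_factorial]
    have h2 : ∏ k ∈ Finset.Ico i M, num k = (Nat.factorial (M - i) : ℝ) := by
      rw [Finset.prod_Ico_eq_prod_range, hnum]
      have : ∀ k ∈ Finset.range (M - i),
          (if i + k < i then ((i - (i + k) : ℕ):ℝ) else ((i + k + 1 - i : ℕ):ℝ))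
          = ((k + 1 : ℕ) : ℝ) := by
        intro k hk
        rw [if_neg (by omega)]
        congr 1
        omega
      rw [Finset.prod_congr rfl this, ← Nat.cast_prod, Finset.prod_range_add_one_eq_factorial]
    rw [h1, h2]
  · -- denominator
    rw [show Finset.Icc 1 M = Finset.Ico 1 (M + 1) by rw [Finset.Ico_add_one_right_eq_Icc],
      Finset.prod_Ico_eq_prod_range]
    simp only [Nat.add_sub_cancel]
    apply Finset.prod_congr rfl
    intro k hk
    push_cast
    ring
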